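/- Let H be a critical 3-hypergraph defined on {0,…,p−1}, p ≥ 5. If there exists k ∈ {3,…,p} such that the primality graph of H induced on {0,…,k−1} equals the cycle C_k, then p is odd, k = p, and H = C_3(T_p), where T_p is the critical circular tournament on {0,…,p−1}. -/

import Mathlib

/-- `M` is a module of the hypergraph with vertex set `verts` and edge set `edges`. -/
def IsModule {α : Type*} [DecidableEq α] (verts : Finset α) (edges : Set (Finset α))
    (M : Finset α) : Prop :=
  M ⊆ verts ∧ ∀ e ∈ edges, (e ∩ M).Nonempty → (e \ M).Nonempty →
    ∃ m ∈ M, e ∩ M = {m} ∧ ∀ n ∈ M, (e \ {m}) ∪ {n} ∈ edges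

/-- `(verts, edges)` is a hypergraph: edges are nonempty subsets of `verts`. -/
def IsHypergraph {α : Type*} (verts : Finset α) (edges : Set (Finset α)) : Prop :=
  ∀ e ∈ edges, e ⊆ verts ∧ e.Nonempty

/-- `(verts, edges)` is a 3-hypergraph: edges are 3-element subsets of `verts`. -/
def Is3Hypergraph {α : Type*} (verts : Finset α) (edges : Set (Finset α)) : Prop :=
  ∀ e ∈ edges, e ⊆ verts ∧ e.card = 3

/-- Edges of the subhypergraph induced by `W`. -/
def induceEdges {α : Type*} (W : Finset α) (edges : Set (Finset α)) : Set (Finset α) :=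
  {e ∈ edges | e ⊆ W}

/-- A hypergraph is prime if it has at least 3 vertices and all its modules are trivial. -/
def IsPrime {α : Type*} [DecidableEq α] (verts : Finset α) (edges : Set (Finset α)) : Prop :=
  3 ≤ verts.card ∧ ∀ M, IsModule verts edges M → M = ∅ ∨ M = verts ∨ ∃ v, M = {v}

/-- A prime hypergraph is critical if removing any vertex destroys primality. -/
def IsCritical {α : Type*} [DecidableEq α] (verts : Finset α) (edges : Set (Finset α)) : Prop :=
  IsPrime verts edges ∧
    ∀ v ∈ verts, ¬ IsPrime (verts.erase v) (induceEdges (verts.erase v) edges)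

/-- Adjacency in the primality graph: `v ≠ w` and `H - {v, w}` is prime. -/
def PrimAdj {α : Type*} [DecidableEq α] (verts : Finset α) (edges : Set (Finset α))
    (v w : α) : Prop :=
  v ≠ w ∧ v ∈ verts ∧ w ∈ verts ∧
    IsPrime (verts \ {v, w}) (induceEdges (verts \ {v, w}) edges)


/-- `(verts, arc)` is a tournament: the arc relation is irreflexive and, on distinct
vertices of `verts`, exactly one of `arc x y`, `arc y x` holds. -/
def IsTournament {α : Type*} (verts : Finset α) (arc : α → α → Prop) : Prop :=
  (∀ x, ¬ arc x x) ∧ ∀ x ∈ verts, ∀ y ∈ verts, x ≠ y → (arc x y ↔ ¬ arc y x)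

/-- `M` is a module of the tournament `(verts, arc)`. -/
def TournMod {α : Type*} (verts : Finset α) (arc : α → α → Prop) (M : Finset α) : Prop :=
  M ⊆ verts ∧ ∀ x ∈ M, ∀ y ∈ M, ∀ v ∈ verts, arc x v → arc v y → v ∈ M

/-- The edge set of the C₃-structure of a tournament: the 3-sets inducing a 3-cycle. -/
def c3Edges {α : Type*} [DecidableEq α] (verts : Finset α) (arc : α → α → Prop) :
    Set (Finset α) :=
  {e | ∃ x y z, x ∈ verts ∧ y ∈ verts ∧ z ∈ verts ∧
    x ≠ y ∧ y ≠ z ∧ x ≠ z ∧ arc x y ∧ arc y z ∧ arc z x ∧ e = {x, y, z}}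

/-- Arc relation of the tournament `T_p` on `{0, …, p-1}`: obtained from the transitive
tournament (arcs `i j` for `i < j`) by reversing all arcs between even and odd vertices. -/
def arcT (i j : ℕ) : Prop :=
  (i < j ∧ i % 2 = j % 2) ∨ (j < i ∧ i % 2 ≠ j % 2)

namespace PCC

section ZHelp
variable {k : ℕ} [NeZero k]

lemma cast_ne_zero {j : ℕ} (h0 : 0 < j) (hk : j < k) : (j : ZMod k) ≠ 0 := by
  intro h
  rcases (ZMod.natCast_eq_zero_iff j k).mp h with h'
  have := Nat.le_of_dvd h0 h'
  omega

lemma cast_inj {i j : ℕ} (hi : i < k) (hj : j < k) (h : (i : ZMod k) = j) : i = j := by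
  have := ZMod.val_cast_of_lt hi
  have := ZMod.val_cast_of_lt hj
  rw [h] at *
  omega

lemma val_inj {x y : ZMod k} (h : x.val = y.val) : x = y := ZMod.val_injective k h

lemma add_cast_ne (x : ZMod k) {j : ℕ} (h0 : 0 < j) (hk : j < k) : x + j ≠ x := by
  intro h
  have : (j : ZMod k) = 0 := by
    have := congrArg (· - x) h
    simpa [add_comm, add_sub_cancel_right] using this
  exact cast_ne_zero h0 hk this

lemma add_cast_inj (x : ZMod k) {i j : ℕ} (hi : i < k) (hj : j < k)
    (h : x + i = x + j) : i = j := by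
  have : (i : ZMod k) = j := by
    have := congrArg (· - x) h
    simpa [add_comm, add_sub_cancel_right] using this
  exact cast_inj hi hj this

lemma val_add_cast (x : ZMod k) (j : ℕ) : (x + (j:ℕ)).val = (x.val + j) % k := by
  conv_lhs => rw [← ZMod.natCast_rightInverse x]
  rw [← Nat.cast_add, ZMod.val_natCast]

end ZHelp

section Removal
variable {E : Set (Finset ℕ)}

lemma mem_induce {W : Finset ℕ} {e : Finset ℕ} : e ∈ induceEdges W E ↔ e ∈ E ∧ e ⊆ W :=
  Iff.rfl

lemma RL1 {W M : Finset ℕ} {x : ℕ} (hM : IsModule W (induceEdges W E) M)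
    (hx : x ∉ M) : IsModule (W.erase x) (induceEdges (W.erase x) E) M := by
  obtain ⟨hMW, hmod⟩ := hM
  constructor
  · intro m hm
    exact Finset.mem_erase.mpr ⟨fun h => hx (h ▸ hm), hMW hm⟩
  · intro e he h1 h2
    have heW : e ∈ induceEdges W E :=
      ⟨he.1, he.2.trans (Finset.erase_subset x W)⟩
    obtain ⟨m, hm, hcap, hswap⟩ := hmod e heW h1 h2
    refine ⟨m, hm, hcap, fun n hn => ?_⟩
    obtain ⟨hE', hsub'⟩ := hswap n hn
    refine ⟨hE', fun t ht => ?_⟩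
    rcases Finset.mem_union.mp ht with ht' | ht'
    · exact he.2 ((Finset.sdiff_subset) ht')
    · have : t = n := Finset.mem_singleton.mp ht'
      subst this
      exact Finset.mem_erase.mpr ⟨fun h => hx (h ▸ hn), hMW hn⟩

lemma RL2 {W M : Finset ℕ} {x : ℕ} (hM : IsModule W (induceEdges W E) M)
    (hx : x ∈ M) : IsModule (W.erase x) (induceEdges (W.erase x) E) (M.erase x) := by
  obtain ⟨hMW, hmod⟩ := hM
  constructor
  · intro m hm
    exact Finset.mem_erase.mpr ⟨(Finset.mem_erase.mp hm).1, hMW (Finset.mem_erase.mp hm).2⟩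
  · intro e he h1 h2
    have hxe : x ∉ e := fun h => (Finset.mem_erase.mp (he.2 h)).1 rfl
    have hcap1 : e ∩ M = e ∩ M.erase x := by
      ext t
      simp only [Finset.mem_inter, Finset.mem_erase]
      exact ⟨fun ⟨a, b⟩ => ⟨a, fun h => hxe (h ▸ a), b⟩, fun ⟨a, _, b⟩ => ⟨a, b⟩⟩
    have hsd1 : e \ M = e \ M.erase x := by
      ext t
      simp only [Finset.mem_sdiff, Finset.mem_erase]
      constructor
      · rintro ⟨a, b⟩; exact ⟨a, fun ⟨_, h⟩ => b h⟩
      · rintro ⟨a, b⟩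
        refine ⟨a, fun h => b ⟨fun h' => hxe (h' ▸ a), h⟩⟩
    have heW : e ∈ induceEdges W E := ⟨he.1, he.2.trans (Finset.erase_subset x W)⟩
    obtain ⟨m, hm, hcap, hswap⟩ := hmod e heW (by rwa [hcap1]) (by rwa [hsd1])
    have hme : m ∈ e := by
      have : m ∈ e ∩ M := hcap ▸ Finset.mem_singleton_self m
      exact (Finset.mem_inter.mp this).1
    have hmx : m ≠ x := fun h => hxe (h ▸ hme)
    refine ⟨m, Finset.mem_erase.mpr ⟨hmx, hm⟩, by rw [← hcap1, hcap], fun n hn => ?_⟩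
    obtain ⟨hnx, hnM⟩ := Finset.mem_erase.mp hn
    obtain ⟨hE', hsub'⟩ := hswap n hnM
    refine ⟨hE', fun t ht => ?_⟩
    rcases Finset.mem_union.mp ht with ht' | ht'
    · exact he.2 ((Finset.sdiff_subset) ht')
    · have : t = n := Finset.mem_singleton.mp ht'
      subst this
      exact Finset.mem_erase.mpr ⟨hnx, hMW hnM⟩

end Removal

end PCC

namespace PCC

lemma sdiff_pair (p i j : ℕ) :
    Finset.range p \ {i, j} = ((Finset.range p).erase i).erase j := by
  ext t
  simp only [Finset.mem_sdiff, Finset.mem_range, Finset.mem_insert, Finset.mem_singleton,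
    Finset.mem_erase]
  tauto

lemma cycle_modules (p k : ℕ) [NeZero k] (hp : 5 ≤ p) (hk3 : 3 ≤ k) (hkp : k ≤ p)
    (E : Set (Finset ℕ))
    (hc : IsCritical (Finset.range p) E)
    (hcyc : ∀ i < k, ∀ j < k, PrimAdj (Finset.range p) E i j ↔
      (j = i + 1 ∨ i = j + 1 ∨ (i = 0 ∧ j = k - 1) ∨ (j = 0 ∧ i = k - 1)))
    (a : ZMod k) :
    IsModule ((Finset.range p).erase a.val)
      (induceEdges ((Finset.range p).erase a.val) E) {(a-1).val, (a+1).val} := by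
  set i := a.val with hidef
  have hik : i < k := ZMod.val_lt a
  have hip : i < p := lt_of_lt_of_le hik hkp
  set j₁ := (a+1).val with hj₁def
  set j₂ := (a-1).val with hj₂def
  have hj₁ : j₁ = (i + 1) % k := by
    rw [hj₁def, show a + 1 = a + ((1:ℕ):ZMod k) by norm_num, val_add_cast]
  have hj₂ : j₂ = (i + (k-1)) % k := by
    rw [hj₂def, show a - 1 = a + ((k-1:ℕ):ZMod k) by
      push_cast [Nat.cast_sub (by omega : 1 ≤ k)]
      simp [ZMod.natCast_self]
      ring, val_add_cast]
  have hj₁k : j₁ < k := by rw [hj₁]; exact Nat.mod_lt _ (by omega)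
  have hj₂k : j₂ < k := by rw [hj₂]; exact Nat.mod_lt _ (by omega)
  -- distinctness
  have hne1 : a + 1 ≠ a := by
    have := add_cast_ne (k := k) a (j := 1) one_pos (by omega)
    simpa using this
  have hne2 : a - 1 ≠ a := by
    intro h
    have : a + 1 = a := by
      have := congrArg (· + 1) h
      simpa [sub_add_cancel] using this
    exact hne1 this
  have hne3 : a + 1 ≠ a - 1 := by
    intro h
    have h2 : ((2:ℕ) : ZMod k) = 0 := by
      have := congrArg (· - (a-1)) h
      push_cast
      simp only [sub_self] at this
      rw [← this]
      ring
    exact cast_ne_zero (by omega) (by omega) h2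
  have hj₁i : j₁ ≠ i := fun h => hne1 (val_inj h)
  have hj₂i : j₂ ≠ i := fun h => hne2 (val_inj h)
  have hj₁j₂ : j₁ ≠ j₂ := fun h => hne3 (val_inj h)
  -- primality of H - {i, j₁} and H - {i, j₂}
  have hP₁ : IsPrime (((Finset.range p).erase i).erase j₁)
      (induceEdges (((Finset.range p).erase i).erase j₁) E) := by
    rw [← sdiff_pair]
    refine ((hcyc i hik j₁ hj₁k).mpr ?_).2.2.2
    rcases Nat.lt_or_ge (i+1) k with h | h
    · left; rw [hj₁, Nat.mod_eq_of_lt h]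
    · have hik' : i + 1 = k := by omega
      right; right; right
      constructor
      · rw [hj₁, hik', Nat.mod_self]
      · omega
  have hP₂ : IsPrime (((Finset.range p).erase i).erase j₂)
      (induceEdges (((Finset.range p).erase i).erase j₂) E) := by
    rw [← sdiff_pair]
    refine ((hcyc i hik j₂ hj₂k).mpr ?_).2.2.2
    rcases Nat.eq_zero_or_pos i with h | h
    · right; right; left
      constructor
      · exact h
      · rw [hj₂, h, Nat.zero_add, Nat.mod_eq_of_lt (by omega)]
    · right; left
      rw [hj₂, show i + (k-1) = k + (i-1) by omega, Nat.add_mod_left,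
        Nat.mod_eq_of_lt (by omega)]
      omega
  -- non-primality of H - i gives a nontrivial module
  have hnp := hc.2 i (Finset.mem_range.mpr hip)
  have hcard : ((Finset.range p).erase i).card = p - 1 := by
    rw [Finset.card_erase_of_mem (Finset.mem_range.mpr hip), Finset.card_range]
  rw [IsPrime] at hnp
  push_neg at hnp
  obtain ⟨M, hM, hM0, hMfull, hMsing⟩ := hnp (by omega)
  -- j₁ ∈ range p, j₂ ∈ range p, in erase i
  have hj₁mem : j₁ ∈ (Finset.range p).erase i :=
    Finset.mem_erase.mpr ⟨hj₁i, Finset.mem_range.mpr (by omega)⟩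
  have hj₂mem : j₂ ∈ (Finset.range p).erase i :=
    Finset.mem_erase.mpr ⟨hj₂i, Finset.mem_range.mpr (by omega)⟩
  have hMcard : M.card ≤ p - 1 := hcard ▸ Finset.card_le_card hM.1
  -- first: j₁ ∈ M and j₂ ∈ M
  have key : ∀ j j', j = j₁ ∧ j' = j₂ ∨ j = j₂ ∧ j' = j₁ → j ∈ M := by
    rintro j j' hjj'
    have hPj : IsPrime (((Finset.range p).erase i).erase j)
        (induceEdges (((Finset.range p).erase i).erase j) E) := by
      rcases hjj' with ⟨h1, _⟩ | ⟨h1, _⟩ <;> subst h1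
      exacts [hP₁, hP₂]
    have hPj' : IsPrime (((Finset.range p).erase i).erase j')
        (induceEdges (((Finset.range p).erase i).erase j') E) := by
      rcases hjj' with ⟨_, h1⟩ | ⟨_, h1⟩ <;> subst h1
      exacts [hP₂, hP₁]
    have hjj : j ≠ j' := by
      rcases hjj' with ⟨h1, h2⟩ | ⟨h1, h2⟩ <;> subst h1 <;> subst h2
      exacts [hj₁j₂, hj₁j₂.symm]
    have hj'mem : j' ∈ (Finset.range p).erase i := by
      rcases hjj' with ⟨_, h1⟩ | ⟨_, h1⟩ <;> subst h1
      exacts [hj₂mem, hj₁mem]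
    by_contra hjM
    have := RL1 hM hjM
    rcases hPj.2 M this with h | h | ⟨v, h⟩
    · exact hM0.ne_empty h
    · -- M = ((range p).erase i).erase j; then erase j' is a module of prime H-{i,j'}
      have hj'M : j' ∈ M := by
        rw [h]
        exact Finset.mem_erase.mpr ⟨hjj.symm, hj'mem⟩
      have h2 := RL2 hM hj'M
      have hMcard' : M.card = p - 2 := by
        rw [h, Finset.card_erase_of_mem (by
          rcases hjj' with ⟨h1, _⟩ | ⟨h1, _⟩ <;> subst h1
          exacts [hj₁mem, hj₂mem]), hcard]
        omega
      rcases hPj'.2 _ h2 with h' | h' | ⟨v, h'⟩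
      · have : M.card - 1 = 0 := by
          rw [← Finset.card_erase_of_mem hj'M, h', Finset.card_empty]
        omega
      · have hc1 : M.card - 1 = p - 2 := by
          rw [← Finset.card_erase_of_mem hj'M, h']
          rw [Finset.card_erase_of_mem hj'mem, hcard]
          omega
        omega
      · have : M.card - 1 = 1 := by
          rw [← Finset.card_erase_of_mem hj'M, h', Finset.card_singleton]
        omega
    · -- M = {v} : contradiction with nontriviality
      exact hMsing v h
  have hj₁M : j₁ ∈ M := key j₁ j₂ (Or.inl ⟨rfl, rfl⟩)
  have hj₂M : j₂ ∈ M := key j₂ j₁ (Or.inr ⟨rfl, rfl⟩)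
  -- now M.erase j₁ is a module of prime H-{i,j₁}
  have h2 := RL2 hM hj₁M
  rcases hP₁.2 _ h2 with h' | h' | ⟨v, h'⟩
  · exfalso
    have : j₂ ∈ M.erase j₁ := Finset.mem_erase.mpr ⟨fun h => hj₁j₂ h.symm, hj₂M⟩
    rw [h'] at this
    exact absurd this (Finset.notMem_empty _)
  · exfalso
    have hc1 : M.card - 1 = p - 2 := by
      rw [← Finset.card_erase_of_mem hj₁M, h', Finset.card_erase_of_mem hj₁mem, hcard]
      omega
    have : M.card = p - 1 := by omega
    have : M = (Finset.range p).erase i := Finset.eq_of_subset_of_card_le hM.1 (by omega)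
    exact hMfull this
  · -- M.erase j₁ = {v}; v = j₂
    have hvj₂ : v = j₂ := by
      have : j₂ ∈ M.erase j₁ := Finset.mem_erase.mpr ⟨fun h => hj₁j₂ h.symm, hj₂M⟩
      rw [h'] at this
      exact (Finset.mem_singleton.mp this).symm
    have hMeq : M = {j₂, j₁} := by
      have : insert j₁ (M.erase j₁) = M := Finset.insert_erase hj₁M
      rw [← this, h', hvj₂]
      ext t
      simp only [Finset.mem_insert, Finset.mem_singleton]
      tauto
    rw [show ({(a-1).val, (a+1).val} : Finset ℕ) = {j₂, j₁} from rfl, ← hMeq]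
    exact hM


set_option maxHeartbeats 2000000 in
lemma c3_char (p : ℕ) (e : Finset ℕ) :
    e ∈ c3Edges (Finset.range p) arcT ↔
    ∃ v1 v2 v3, v1 < v2 ∧ v2 < v3 ∧ v3 < p ∧ e = {v1,v2,v3} ∧
      (v2-v1) % 2 = 1 ∧ (v3-v2) % 2 = 1 := by
  constructor
  · rintro ⟨x, y, z, hx, hy, hz, hxy, hyz, hxz, a1, a2, a3, rfl⟩
    rw [Finset.mem_range] at hx hy hz
    simp only [arcT] at a1 a2 a3
    rcases hxy.lt_or_gt with h1 | h1 <;> rcases hxz.lt_or_gt with h2 | h2 <;>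
      rcases hyz.lt_or_gt with h3 | h3
    · exact ⟨x, y, z, h1, h3, by omega, rfl, by omega, by omega⟩
    · exact ⟨x, z, y, h2, h3, by omega,
        by ext t; simp only [Finset.mem_insert, Finset.mem_singleton]; tauto, by omega, by omega⟩
    · exact absurd h1 (by omega)
    · exact ⟨z, x, y, h2, h1, by omega,
        by ext t; simp only [Finset.mem_insert, Finset.mem_singleton]; tauto, by omega, by omega⟩
    · exact ⟨y, x, z, h1, h2, by omega,
        by ext t; simp only [Finset.mem_insert, Finset.mem_singleton]; tauto, by omega, by omega⟩
    · exact absurd h1 (by omega)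
    · exact ⟨y, z, x, h3, h2, by omega,
        by ext t; simp only [Finset.mem_insert, Finset.mem_singleton]; tauto, by omega, by omega⟩
    · exact ⟨z, y, x, h3, h1, by omega,
        by ext t; simp only [Finset.mem_insert, Finset.mem_singleton]; tauto, by omega, by omega⟩
  · rintro ⟨v1, v2, v3, h12, h23, h3p, rfl, o1, o2⟩
    refine ⟨v1, v3, v2, Finset.mem_range.mpr (by omega), Finset.mem_range.mpr (by omega),
      Finset.mem_range.mpr (by omega), by omega, by omega, by omega, ?_, ?_, ?_, ?_⟩
    · simp only [arcT]; omega
    · simp only [arcT]; omega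
    · simp only [arcT]; omega
    · ext t; simp only [Finset.mem_insert, Finset.mem_singleton]; tauto

section Core

variable {p k : ℕ} [NeZero k] (hp : 5 ≤ p) (hk3 : 3 ≤ k) (hkp : k ≤ p)
  {E : Set (Finset ℕ)} (h3 : Is3Hypergraph (Finset.range p) E)
  (HM : ∀ a : ZMod k, IsModule ((Finset.range p).erase a.val)
      (induceEdges ((Finset.range p).erase a.val) E) {(a-1).val, (a+1).val})

include hk3 in
lemma sub_one_eq (a : ZMod k) : a - 1 = a + ((k-1 : ℕ) : ZMod k) := by
  have h1 : (1:ℕ) ≤ k := by omega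
  push_cast [Nat.cast_sub h1]
  simp [ZMod.natCast_self]
  ring

include hk3 in
lemma ne_add_one (a : ZMod k) : a ≠ a + 1 := by
  have := add_cast_ne (k := k) a (j := 1) one_pos (by omega)
  simpa using this.symm

include hk3 in
lemma ne_sub_one (a : ZMod k) : a ≠ a - 1 := by
  rw [sub_one_eq hk3]
  exact (add_cast_ne (k := k) a (j := k-1) (by omega) (by omega)).symm

include hk3 in
lemma sub_ne_add (a : ZMod k) : a - 1 ≠ a + 1 := by
  rw [sub_one_eq hk3, show a + 1 = a + ((1:ℕ) : ZMod k) by norm_num]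
  intro h
  have := add_cast_inj (k := k) a (by omega : k-1 < k) (by omega : 1 < k) h
  omega

include h3 in
lemma mem_ind_erase (a : ZMod k) {e : Finset ℕ} (he : e ∈ E) (h0 : a.val ∉ e) :
    e ∈ induceEdges ((Finset.range p).erase a.val) E := by
  refine ⟨he, fun t ht => Finset.mem_erase.mpr ⟨fun h => h0 (h ▸ ht), (h3 e he).1 ht⟩⟩

lemma sdiff_pair_ne {e : Finset ℕ} (hcard : e.card = 3) (x y : ℕ) :
    (e \ {x, y}).Nonempty := by
  rw [← Finset.card_pos]
  have h1 : (e ∩ ({x, y} : Finset ℕ)).card ≤ 2 := by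
    calc (e ∩ ({x,y} : Finset ℕ)).card ≤ ({x,y} : Finset ℕ).card :=
          Finset.card_le_card (Finset.inter_subset_right)
      _ ≤ 2 := (Finset.card_insert_le _ _).trans (by simp)
  have h2 : e.card - ({x,y} : Finset ℕ).card ≤ (e \ ({x,y} : Finset ℕ)).card :=
    Finset.le_card_sdiff _ _
  have h3 : ({x,y} : Finset ℕ).card ≤ 2 := (Finset.card_insert_le _ _).trans (by simp)
  omega

include hk3 h3 HM in
lemma hA (a : ZMod k) {e : Finset ℕ} (he : e ∈ E)
    (h1 : (a-1).val ∈ e) (h2 : (a+1).val ∈ e) (h0 : a.val ∉ e) : False := by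
  obtain ⟨hMW, hmod⟩ := HM a
  have hcard := (h3 e he).2
  obtain ⟨m, hm, hcap, _⟩ := hmod e (mem_ind_erase h3 a he h0)
    ⟨(a-1).val, Finset.mem_inter.mpr ⟨h1, Finset.mem_insert_self _ _⟩⟩
    (sdiff_pair_ne hcard _ _)
  have e1 : (a-1).val ∈ e ∩ {(a-1).val, (a+1).val} :=
    Finset.mem_inter.mpr ⟨h1, Finset.mem_insert_self _ _⟩
  have e2 : (a+1).val ∈ e ∩ {(a-1).val, (a+1).val} :=
    Finset.mem_inter.mpr ⟨h2, Finset.mem_insert_of_mem (Finset.mem_singleton_self _)⟩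
  rw [hcap] at e1 e2
  have := (Finset.mem_singleton.mp e1).trans (Finset.mem_singleton.mp e2).symm
  exact sub_ne_add hk3 a (val_inj this)

include hk3 h3 HM in
lemma hB (a : ZMod k) {e : Finset ℕ} (he : e ∈ E)
    (h1 : (a-1).val ∈ e) (h2 : (a+1).val ∉ e) (h0 : a.val ∉ e) :
    e.erase ((a-1).val) ∪ {(a+1).val} ∈ E := by
  obtain ⟨hMW, hmod⟩ := HM a
  have hcard := (h3 e he).2
  obtain ⟨m, hm, hcap, hswap⟩ := hmod e (mem_ind_erase h3 a he h0)
    ⟨(a-1).val, Finset.mem_inter.mpr ⟨h1, Finset.mem_insert_self _ _⟩⟩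
    (sdiff_pair_ne hcard _ _)
  have e1 : (a-1).val ∈ e ∩ {(a-1).val, (a+1).val} :=
    Finset.mem_inter.mpr ⟨h1, Finset.mem_insert_self _ _⟩
  rw [hcap] at e1
  have hm1 : m = (a-1).val := (Finset.mem_singleton.mp e1).symm
  have h5 := (hswap ((a+1).val) (Finset.mem_insert_of_mem (Finset.mem_singleton_self _))).1
  rw [hm1] at h5
  rw [Finset.erase_eq]
  exact h5

include hk3 h3 HM in
lemma hB' (a : ZMod k) {e : Finset ℕ} (he : e ∈ E)
    (h1 : (a+1).val ∈ e) (h2 : (a-1).val ∉ e) (h0 : a.val ∉ e) :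
    e.erase ((a+1).val) ∪ {(a-1).val} ∈ E := by
  obtain ⟨hMW, hmod⟩ := HM a
  have hcard := (h3 e he).2
  obtain ⟨m, hm, hcap, hswap⟩ := hmod e (mem_ind_erase h3 a he h0)
    ⟨(a+1).val, Finset.mem_inter.mpr ⟨h1, Finset.mem_insert_of_mem (Finset.mem_singleton_self _)⟩⟩
    (sdiff_pair_ne hcard _ _)
  have e1 : (a+1).val ∈ e ∩ {(a-1).val, (a+1).val} :=
    Finset.mem_inter.mpr ⟨h1, Finset.mem_insert_of_mem (Finset.mem_singleton_self _)⟩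
  rw [hcap] at e1
  have hm1 : m = (a+1).val := (Finset.mem_singleton.mp e1).symm
  have h5 := (hswap ((a-1).val) (Finset.mem_insert_self _ _)).1
  rw [hm1] at h5
  rw [Finset.erase_eq]
  exact h5

include hk3 h3 HM in
lemma evenGap : ∀ (m : ℕ), 0 < m → 2*m < k → ∀ (x : ZMod k) (e : Finset ℕ), e ∈ E →
    x.val ∈ e → ((x + ((2*m : ℕ) : ZMod k)).val ∈ e) →
    (∀ j : ℕ, 0 < j → j < 2*m → ((x + (j : ℕ) : ZMod k)).val ∉ e) → False := by
  intro m
  induction m with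
  | zero => omega
  | succ n ih =>
    intro hpos hlt x e he hx hx2 hint
    rcases Nat.eq_zero_or_pos n with hn | hn
    · subst hn
      refine hA hk3 h3 HM (x+1) he ?_ ?_ ?_
      · rwa [add_sub_cancel_right]
      · have : x + 1 + 1 = x + ((2*1 : ℕ) : ZMod k) := by push_cast; ring
        rwa [this]
      · have : x + 1 = x + ((1 : ℕ) : ZMod k) := by push_cast; ring
        rw [this]
        exact hint 1 one_pos (by omega)
    · have h2n2 : x + ((2*(n+1) : ℕ) : ZMod k) = (x + ((2*n+1 : ℕ) : ZMod k)) + 1 := by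
        push_cast; ring
      have h2n0 : x + ((2*n : ℕ) : ZMod k) = (x + ((2*n+1 : ℕ) : ZMod k)) - 1 := by
        push_cast; ring
      set a : ZMod k := x + ((2*n+1 : ℕ) : ZMod k) with ha
      have hst1 : (a+1).val ∈ e := by rw [← h2n2]; exact hx2
      have hst2 : (a-1).val ∉ e := by
        rw [← h2n0]
        exact hint (2*n) (by omega) (by omega)
      have hst0 : a.val ∉ e := hint (2*n+1) (by omega) (by omega)
      have he' := hB' hk3 h3 HM a he hst1 hst2 hst0
      refine ih (by omega) (by omega) x _ he' ?_ ?_ ?_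
      · apply Finset.mem_union_left
        apply Finset.mem_erase.mpr
        refine ⟨?_, hx⟩
        intro h
        have : x = a + 1 := val_inj h
        rw [← h2n2] at this
        exact add_cast_ne (k := k) x (j := 2*(n+1)) (by omega) (by omega) this.symm
      · apply Finset.mem_union_right
        rw [← h2n0]
        exact Finset.mem_singleton_self _
      · intro j hj0 hj2 hmem
        rcases Finset.mem_union.mp hmem with h | h
        · exact hint j hj0 (by omega) (Finset.mem_erase.mp h).2
        · rw [← h2n0] at h
          have := val_inj (Finset.mem_singleton.mp h)
          have := add_cast_inj (k := k) x (show j < k by omega) (show 2*n < k by omega) this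
          omega


lemma val_cast_lt {v : ℕ} (hv : v < k) : ((v : ℕ) : ZMod k).val = v := by
  have : NeZero k := ⟨by omega⟩
  exact ZMod.val_cast_of_lt hv

include hk3 h3 HM in
lemma allOddGaps {v1 v2 v3 : ℕ} (h12 : v1 < v2) (h23 : v2 < v3) (h3k : v3 < k)
    (he : ({v1, v2, v3} : Finset ℕ) ∈ E) :
    (v2 - v1) % 2 = 1 ∧ (v3 - v2) % 2 = 1 ∧ (v1 + k - v3) % 2 = 1 := by
  have hnz : NeZero k := ⟨by omega⟩
  refine ⟨?_, ?_, ?_⟩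
  · by_contra hev
    obtain ⟨m, hm⟩ : ∃ m, v2 - v1 = 2*m := ⟨(v2-v1)/2, by omega⟩
    refine evenGap hk3 h3 HM m (by omega) (by omega) ((v1 : ℕ) : ZMod k) _ he ?_ ?_ ?_
    · rw [val_cast_lt (by omega)]; simp
    · rw [show (((v1:ℕ) : ZMod k) + ((2*m : ℕ) : ZMod k)) = ((v2 : ℕ) : ZMod k) by
        rw [← Nat.cast_add]; congr 1; omega]
      rw [val_cast_lt (by omega)]; simp
    · intro j hj0 hj1 hmem
      rw [show (((v1:ℕ) : ZMod k) + ((j : ℕ) : ZMod k)) = ((v1 + j : ℕ) : ZMod k) by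
        rw [← Nat.cast_add]] at hmem
      rw [val_cast_lt (by omega)] at hmem
      simp only [Finset.mem_insert, Finset.mem_singleton] at hmem
      omega
  · by_contra hev
    obtain ⟨m, hm⟩ : ∃ m, v3 - v2 = 2*m := ⟨(v3-v2)/2, by omega⟩
    refine evenGap hk3 h3 HM m (by omega) (by omega) ((v2 : ℕ) : ZMod k) _ he ?_ ?_ ?_
    · rw [val_cast_lt (by omega)]; simp
    · rw [show (((v2:ℕ) : ZMod k) + ((2*m : ℕ) : ZMod k)) = ((v3 : ℕ) : ZMod k) by
        rw [← Nat.cast_add]; congr 1; omega]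
      rw [val_cast_lt (by omega)]; simp
    · intro j hj0 hj1 hmem
      rw [show (((v2:ℕ) : ZMod k) + ((j : ℕ) : ZMod k)) = ((v2 + j : ℕ) : ZMod k) by
        rw [← Nat.cast_add]] at hmem
      rw [val_cast_lt (by omega)] at hmem
      simp only [Finset.mem_insert, Finset.mem_singleton] at hmem
      omega
  · by_contra hev
    obtain ⟨m, hm⟩ : ∃ m, v1 + k - v3 = 2*m := ⟨(v1+k-v3)/2, by omega⟩
    refine evenGap hk3 h3 HM m (by omega) (by omega) ((v3 : ℕ) : ZMod k) _ he ?_ ?_ ?_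
    · rw [val_cast_lt (by omega)]; simp
    · rw [show (((v3:ℕ) : ZMod k) + ((2*m : ℕ) : ZMod k)) = ((v1 : ℕ) : ZMod k) by
        rw [← Nat.cast_add, show v3 + 2*m = v1 + k by omega, Nat.cast_add,
          ZMod.natCast_self, add_zero]]
      rw [val_cast_lt (by omega)]; simp
    · intro j hj0 hj1 hmem
      rw [show (((v3:ℕ) : ZMod k) + ((j : ℕ) : ZMod k)) = ((v3 + j : ℕ) : ZMod k) by
        rw [← Nat.cast_add]] at hmem
      rw [ZMod.val_natCast] at hmem
      rcases Nat.lt_or_ge (v3 + j) k with hcase | hcase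
      · rw [Nat.mod_eq_of_lt hcase] at hmem
        simp only [Finset.mem_insert, Finset.mem_singleton] at hmem
        omega
      · rw [Nat.mod_eq_sub_mod hcase, Nat.mod_eq_of_lt (by omega)] at hmem
        simp only [Finset.mem_insert, Finset.mem_singleton] at hmem
        omega

include hk3 h3 HM in
lemma SFree : ∀ (s : ℕ) (γ : ZMod k) (C : Finset ℕ), (∀ t ∈ C, k ≤ t) →
    C ∪ {γ.val} ∈ E → C ∪ {(γ - ((2*s : ℕ) : ZMod k)).val} ∈ E := by
  have hnz : NeZero k := ⟨by omega⟩
  intro s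
  induction s with
  | zero => intro γ C hC he; simpa using he
  | succ n ih =>
    intro γ C hC he
    have hcur := ih γ C hC he
    set c : ZMod k := γ - ((2*n : ℕ) : ZMod k) with hc
    have hcC : c.val ∉ C := fun h => absurd (hC _ h) (by have := ZMod.val_lt c; omega)
    have key := hB' hk3 h3 HM (c - 1) hcur ?h1 ?h2 ?h0
    case h1 =>
      rw [sub_add_cancel]
      exact Finset.mem_union_right _ (Finset.mem_singleton_self _)
    case h2 =>
      intro hmem
      rcases Finset.mem_union.mp hmem with h | h
      · exact absurd (hC _ h) (by have := ZMod.val_lt (c-1-1); omega)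
      · have : c - 1 - 1 = c := val_inj (Finset.mem_singleton.mp h)
        have h2 : ((2:ℕ) : ZMod k) = 0 := by
          have h4 : c - (c - 1 - 1) = ((2:ℕ):ZMod k) := by push_cast; ring
          rw [← h4, this, sub_self]
        exact cast_ne_zero (by omega) (by omega) h2
    case h0 =>
      intro hmem
      rcases Finset.mem_union.mp hmem with h | h
      · exact absurd (hC _ h) (by have := ZMod.val_lt (c-1); omega)
      · have : c - 1 = c := val_inj (Finset.mem_singleton.mp h)
        have h2 : ((1:ℕ) : ZMod k) = 0 := by
          have h4 : c - (c - 1) = ((1:ℕ):ZMod k) := by push_cast; ring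
          rw [← h4, this, sub_self]
        exact cast_ne_zero (by omega) (by omega) h2
    rw [sub_add_cancel] at key
    have herase : (C ∪ {c.val}).erase c.val = C := by
      rw [Finset.union_comm, ← Finset.insert_eq, Finset.erase_insert hcC]
    rw [herase] at key
    have : c - 1 - 1 = γ - ((2*(n+1) : ℕ) : ZMod k) := by
      rw [hc]; push_cast; ring
    rwa [this] at key

include hk3 h3 HM in
lemma SBlocked (hke : k % 2 = 0) (δ : ZMod k) (C : Finset ℕ)
    (hC : ∀ t ∈ C, t < k → t = δ.val) :
    ∀ s : ℕ, 2*s+1 < k →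
      ((C ∪ {(δ + ((2*s+1 : ℕ) : ZMod k)).val} ∈ E) ↔
       (C ∪ {(δ + ((1 : ℕ) : ZMod k)).val} ∈ E)) := by
  have hnz : NeZero k := ⟨by omega⟩
  intro s
  induction s with
  | zero => intro _; rfl
  | succ n ih =>
    intro hlt
    have hih := ih (by omega)
    -- link between n+1 and n
    set a : ZMod k := δ + ((2*n+2 : ℕ) : ZMod k) with ha
    have hodd_ne : ∀ (j : ℕ), j % 2 = 1 → (δ + ((j : ℕ) : ZMod k)).val ∉ C := by
      intro j hj hmem
      have hlt' : (δ + ((j : ℕ) : ZMod k)).val < k := ZMod.val_lt _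
      have := hC _ hmem hlt'
      have heq : δ + ((j : ℕ) : ZMod k) = δ := val_inj (by rw [this])
      have : ((j : ℕ) : ZMod k) = 0 := by
        have := congrArg (· - δ) heq
        simpa [add_comm, add_sub_cancel_right] using this
      rcases (ZMod.natCast_eq_zero_iff j k).mp this with hdvd
      have h2k : 2 ∣ k := Nat.dvd_of_mod_eq_zero hke
      obtain ⟨c, hc⟩ := h2k.trans hdvd
      omega
    have hane : ∀ (j j' : ℕ), j < k → j' < k → j ≠ j' →
        (δ + ((j : ℕ) : ZMod k)).val ≠ (δ + ((j' : ℕ) : ZMod k)).val := by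
      intro j j' hjk hj'k hne h
      exact hne (add_cast_inj δ hjk hj'k (val_inj h))
    have haC : a.val ∉ C := by
      intro hmem
      have := hC _ hmem (ZMod.val_lt a)
      have heq : a = δ := val_inj (by rw [this])
      rw [ha] at heq
      have : ((2*n+2 : ℕ) : ZMod k) = 0 := by
        have := congrArg (· - δ) heq
        simpa [add_comm, add_sub_cancel_right] using this
      rcases (ZMod.natCast_eq_zero_iff _ k).mp this with hdvd
      have := Nat.le_of_dvd (by omega) hdvd
      omega
    have hsub : a - 1 = δ + ((2*n+1 : ℕ) : ZMod k) := by rw [ha]; push_cast; ring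
    have hadd : a + 1 = δ + ((2*n+3 : ℕ) : ZMod k) := by rw [ha]; push_cast; ring
    have hlowC : (δ + ((2*n+1 : ℕ) : ZMod k)).val ∉ C := hodd_ne _ (by omega)
    have hhiC : (δ + ((2*n+3 : ℕ) : ZMod k)).val ∉ C := hodd_ne _ (by omega)
    have hstep : (C ∪ {(δ + ((2*(n+1)+1 : ℕ) : ZMod k)).val} ∈ E) ↔
        (C ∪ {(δ + ((2*n+1 : ℕ) : ZMod k)).val} ∈ E) := by
      have hn3 : (2*(n+1)+1 : ℕ) = 2*n+3 := by ring
      rw [hn3]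
      constructor
      · intro he
        have key := hB' hk3 h3 HM a he ?h1 ?h2 ?h0
        case h1 =>
          rw [hadd]
          exact Finset.mem_union_right _ (Finset.mem_singleton_self _)
        case h2 =>
          rw [hsub]
          intro hmem
          rcases Finset.mem_union.mp hmem with h | h
          · exact hlowC h
          · exact hane _ _ (by omega) (by omega) (by omega) (Finset.mem_singleton.mp h)
        case h0 =>
          intro hmem
          rcases Finset.mem_union.mp hmem with h | h
          · exact haC h
          · rw [ha] at h
            exact hane _ _ (by omega) (by omega) (by omega) (Finset.mem_singleton.mp h)
        rw [hadd] at key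
        have herase : (C ∪ {(δ + ((2*n+3:ℕ) : ZMod k)).val}).erase
            (δ + ((2*n+3:ℕ) : ZMod k)).val = C := by
          rw [Finset.union_comm, ← Finset.insert_eq, Finset.erase_insert hhiC]
        rw [herase, hsub] at key
        exact key
      · intro he
        have key := hB hk3 h3 HM a he ?h1 ?h2 ?h0
        case h1 =>
          rw [hsub]
          exact Finset.mem_union_right _ (Finset.mem_singleton_self _)
        case h2 =>
          rw [hadd]
          intro hmem
          rcases Finset.mem_union.mp hmem with h | h
          · exact hhiC h
          · exact hane _ _ (by omega) (by omega) (by omega) (Finset.mem_singleton.mp h)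
        case h0 =>
          intro hmem
          rcases Finset.mem_union.mp hmem with h | h
          · exact haC h
          · rw [ha] at h
            exact hane _ _ (by omega) (by omega) (by omega) (Finset.mem_singleton.mp h)
        rw [hsub] at key
        have herase : (C ∪ {(δ + ((2*n+1:ℕ) : ZMod k)).val}).erase
            (δ + ((2*n+1:ℕ) : ZMod k)).val = C := by
          rw [Finset.union_comm, ← Finset.insert_eq, Finset.erase_insert hlowC]
        rw [herase, hadd] at key
        exact key
    exact hstep.trans hih

lemma val_sub_cast {m t : ℕ} (hm : m < k) (ht : t < k) :
    (((t : ℕ) : ZMod k) - ((m : ℕ) : ZMod k)).val = (t + (k - m)) % k := by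
  have hnz : NeZero k := ⟨by omega⟩
  have : ((t : ℕ) : ZMod k) - ((m : ℕ) : ZMod k) = ((t + (k - m) : ℕ) : ZMod k) := by
    push_cast [Nat.cast_sub (le_of_lt hm)]
    simp [ZMod.natCast_self]
    ring
  rw [this, ZMod.val_natCast]



lemma sort3 {x y z : ℕ} (hxy : x ≠ y) (hxz : x ≠ z) (hyz : y ≠ z) :
    ∃ v1 v2 v3, v1 < v2 ∧ v2 < v3 ∧ ({x,y,z} : Finset ℕ) = {v1,v2,v3} := by
  rcases hxy.lt_or_gt with h1 | h1 <;> rcases hxz.lt_or_gt with h2 | h2 <;>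
    rcases hyz.lt_or_gt with h3 | h3
  · exact ⟨x, y, z, h1, h3, rfl⟩
  · exact ⟨x, z, y, h2, h3, by ext t; simp only [Finset.mem_insert, Finset.mem_singleton]; tauto⟩
  · exact absurd h1 (by omega)
  · exact ⟨z, x, y, h2, h1, by ext t; simp only [Finset.mem_insert, Finset.mem_singleton]; tauto⟩
  · exact ⟨y, x, z, h1, h2, by ext t; simp only [Finset.mem_insert, Finset.mem_singleton]; tauto⟩
  · exact absurd h1 (by omega)
  · exact ⟨y, z, x, h3, h2, by ext t; simp only [Finset.mem_insert, Finset.mem_singleton]; tauto⟩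
  · exact ⟨z, y, x, h3, h1, by ext t; simp only [Finset.mem_insert, Finset.mem_singleton]; tauto⟩

include h3 in
lemma edge_eq_of_mem {e : Finset ℕ} (he : e ∈ E) {x y z : ℕ} (hx : x ∈ e) (hy : y ∈ e)
    (hz : z ∈ e) (hxy : x ≠ y) (hxz : x ≠ z) (hyz : y ≠ z) : e = {x,y,z} := by
  have hsub : ({x,y,z} : Finset ℕ) ⊆ e := by
    intro t ht
    simp only [Finset.mem_insert, Finset.mem_singleton] at ht
    rcases ht with h | h | h <;> subst h <;> assumption
  have hcard : ({x,y,z} : Finset ℕ).card = 3 := by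
    rw [Finset.card_insert_of_notMem (by simp [hxy, hxz]),
      Finset.card_insert_of_notMem (by simp [hyz]), Finset.card_singleton]
  exact (Finset.eq_of_subset_of_card_le hsub (by rw [(h3 e he).2, hcard])).symm

include h3 in
lemma third_elem {e : Finset ℕ} (he : e ∈ E) {x y : ℕ} (hx : x ∈ e) (hy : y ∈ e)
    (hxy : x ≠ y) : ∃ w, w ∈ e ∧ w ≠ x ∧ w ≠ y ∧ e = {x,y,w} := by
  obtain ⟨w, hw⟩ := sdiff_pair_ne (h3 e he).2 x y
  rw [Finset.mem_sdiff] at hw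
  simp only [Finset.mem_insert, Finset.mem_singleton] at hw
  push_neg at hw
  exact ⟨w, hw.1, hw.2.1, hw.2.2, edge_eq_of_mem h3 he hx hy hw.1 hxy hw.2.1.symm hw.2.2.symm⟩

include hk3 h3 HM in
lemma triple_in_k_odd {e : Finset ℕ} (he : e ∈ E) {x y z : ℕ} (hx : x ∈ e) (hy : y ∈ e)
    (hz : z ∈ e) (hxy : x ≠ y) (hxz : x ≠ z) (hyz : y ≠ z)
    (hxk : x < k) (hyk : y < k) (hzk : z < k) : k % 2 = 1 := by
  obtain ⟨v1, v2, v3, h12, h23, hset⟩ := sort3 hxy hxz hyz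
  have heq := edge_eq_of_mem h3 he hx hy hz hxy hxz hyz
  have h3k : v3 < k := by
    have : v3 ∈ ({x,y,z} : Finset ℕ) := hset ▸ (by simp)
    simp only [Finset.mem_insert, Finset.mem_singleton] at this
    rcases this with h | h | h <;> omega
  have he' : ({v1,v2,v3} : Finset ℕ) ∈ E := by rw [← hset, ← heq]; exact he
  obtain ⟨o1, o2, o3⟩ := allOddGaps hk3 h3 HM h12 h23 h3k he'
  omega

include hk3 h3 HM in
lemma pair_gap_false {e : Finset ℕ} (he : e ∈ E) {u v : ℕ} (hu : u ∈ e) (hv : v ∈ e)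
    (huv : u < v) (hvk : v < k) (hclean : ∀ t ∈ e, t = u ∨ t = v ∨ k ≤ t)
    (heven : (v - u) % 2 = 0 ∨ (u + k - v) % 2 = 0) : False := by
  have hnz : NeZero k := ⟨by omega⟩
  rcases heven with hev | hev
  · obtain ⟨m, hm⟩ : ∃ m, v - u = 2*m := ⟨(v-u)/2, by omega⟩
    refine evenGap hk3 h3 HM m (by omega) (by omega) ((u : ℕ) : ZMod k) e he ?_ ?_ ?_
    · rwa [val_cast_lt (by omega)]
    · rw [show (((u:ℕ) : ZMod k) + ((2*m : ℕ) : ZMod k)) = ((v : ℕ) : ZMod k) by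
        rw [← Nat.cast_add]; congr 1; omega]
      rwa [val_cast_lt (by omega)]
    · intro j hj0 hj1 hmem
      rw [show (((u:ℕ) : ZMod k) + ((j : ℕ) : ZMod k)) = ((u + j : ℕ) : ZMod k) by
        rw [← Nat.cast_add]] at hmem
      rw [val_cast_lt (by omega)] at hmem
      rcases hclean _ hmem with h | h | h <;> omega
  · obtain ⟨m, hm⟩ : ∃ m, u + k - v = 2*m := ⟨(u+k-v)/2, by omega⟩
    refine evenGap hk3 h3 HM m (by omega) (by omega) ((v : ℕ) : ZMod k) e he ?_ ?_ ?_
    · rwa [val_cast_lt (by omega)]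
    · rw [show (((v:ℕ) : ZMod k) + ((2*m : ℕ) : ZMod k)) = ((u : ℕ) : ZMod k) by
        rw [← Nat.cast_add, show v + 2*m = u + k by omega, Nat.cast_add,
          ZMod.natCast_self, add_zero]]
      rwa [val_cast_lt (by omega)]
    · intro j hj0 hj1 hmem
      rw [show (((v:ℕ) : ZMod k) + ((j : ℕ) : ZMod k)) = ((v + j : ℕ) : ZMod k) by
        rw [← Nat.cast_add]] at hmem
      rw [ZMod.val_natCast] at hmem
      rcases Nat.lt_or_ge (v + j) k with hcase | hcase
      · rw [Nat.mod_eq_of_lt hcase] at hmem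
        rcases hclean _ hmem with h | h | h <;> omega
      · rw [Nat.mod_eq_sub_mod hcase, Nat.mod_eq_of_lt (by omega)] at hmem
        rcases hclean _ hmem with h | h | h <;> omega

include hp hk3 hkp h3 HM in
lemma k_even_false (hprime : IsPrime (Finset.range p) E) (hke : k % 2 = 0) : False := by
  have hnz : NeZero k := ⟨by omega⟩
  set M : Finset ℕ := (Finset.range k).filter (fun n => n % 2 = 0) with hMdef
  have hmemM : ∀ t, t ∈ M ↔ (t < k ∧ t % 2 = 0) := by
    intro t; simp [hMdef, Finset.mem_filter, Finset.mem_range]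
  -- no two elements of e below k share parity
  have claim1 : ∀ e ∈ E, ∀ x ∈ e, ∀ y ∈ e, x < k → y < k → x ≠ y → x % 2 ≠ y % 2 := by
    intro e he x hx y hy hxk hyk hxy hpar
    obtain ⟨w, hwe, hwx, hwy, hweq⟩ := third_elem h3 he hx hy hxy
    rcases Nat.lt_or_ge w k with hwk | hwk
    · have := triple_in_k_odd hk3 h3 HM he hx hy hwe hxy hwx.symm hwy.symm hxk hyk hwk
      omega
    · rcases hxy.lt_or_gt with h | h
      · refine pair_gap_false hk3 h3 HM he hx hy h hyk ?_ (Or.inl (by omega))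
        intro t ht
        rw [hweq] at ht
        simp only [Finset.mem_insert, Finset.mem_singleton] at ht
        rcases ht with h' | h' | h' <;> subst h' <;> tauto
      · refine pair_gap_false hk3 h3 HM he hy hx h hxk ?_ (Or.inl (by omega))
        intro t ht
        rw [hweq] at ht
        simp only [Finset.mem_insert, Finset.mem_singleton] at ht
        rcases ht with h' | h' | h' <;> subst h' <;> tauto
  -- M is a module
  have hmod : IsModule (Finset.range p) E M := by
    constructor
    · intro t ht
      rw [hmemM] at ht
      exact Finset.mem_range.mpr (by omega)
    · intro e he hcap hsd
      obtain ⟨m₀, hm₀⟩ := hcap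
      rw [Finset.mem_inter, hmemM] at hm₀
      have hm₀e := hm₀.1
      have hm₀k := hm₀.2.1
      have hm₀2 := hm₀.2.2
      have hcapeq : e ∩ M = {m₀} := by
        ext t
        rw [Finset.mem_inter, hmemM, Finset.mem_singleton]
        constructor
        · rintro ⟨ht, htk, ht2⟩
          by_contra htm
          exact claim1 e he t ht m₀ hm₀e htk hm₀k htm (by omega)
        · rintro rfl; exact ⟨hm₀e, hm₀k, hm₀2⟩
      refine ⟨m₀, (hmemM m₀).mpr ⟨hm₀k, hm₀2⟩, hcapeq, ?_⟩
      intro n hn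
      rw [hmemM] at hn
      obtain ⟨hnk, hn2⟩ := hn
      rw [← Finset.erase_eq]
      by_cases hex : ∃ t ∈ e, t ≠ m₀ ∧ t < k
      · -- blocked case: second cycle vertex d₀ (odd)
        obtain ⟨d₀, hd₀e, hd₀m, hd₀k⟩ := hex
        have hd₀2 : d₀ % 2 = 1 := by
          have := claim1 e he d₀ hd₀e m₀ hm₀e hd₀k hm₀k hd₀m
          omega
        set C : Finset ℕ := e.erase m₀ with hCdef
        have hC : ∀ t ∈ C, t < k → t = d₀ := by
          intro t ht htk
          obtain ⟨htm, hte⟩ := Finset.mem_erase.mp ht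
          by_contra htd
          have := triple_in_k_odd hk3 h3 HM he hte hd₀e hm₀e htd htm
            hd₀m htk hd₀k hm₀k
          omega
        set δ : ZMod k := ((d₀ : ℕ) : ZMod k) with hδdef
        have hδval : δ.val = d₀ := val_cast_lt hd₀k
        have hrep : ∀ n' : ℕ, n' < k → n' % 2 = 0 →
            ∃ s : ℕ, 2*s+1 < k ∧ (δ + ((2*s+1 : ℕ) : ZMod k)).val = n' := by
          intro n' hn'k hn'2
          set t := (n' + k - d₀) % k with htdef
          have ht2 : t % 2 = 1 := by
            rw [htdef, Nat.mod_mod_of_dvd _ (Nat.dvd_of_mod_eq_zero hke)]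
            omega
          have htk : t < k := Nat.mod_lt _ (by omega)
          refine ⟨(t-1)/2, by omega, ?_⟩
          rw [show 2*((t-1)/2)+1 = t by omega, htdef]
          have hcast : ((((n' + k - d₀) % k : ℕ)) : ZMod k) = ((n' + k - d₀ : ℕ) : ZMod k) :=
            ZMod.natCast_mod _ _
          rw [hcast, hδdef, ← Nat.cast_add, show d₀ + (n' + k - d₀) = n' + k by omega,
            Nat.cast_add, ZMod.natCast_self, add_zero]
          exact val_cast_lt hn'k
        obtain ⟨s₁, hs₁k, hs₁⟩ := hrep m₀ hm₀k hm₀2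
        obtain ⟨s₂, hs₂k, hs₂⟩ := hrep n hnk hn2
        have hCm₀ : m₀ ∉ C := fun h => (Finset.mem_erase.mp h).1 rfl
        have heC : e = C ∪ {m₀} := by
          rw [hCdef, Finset.union_comm, ← Finset.insert_eq, Finset.insert_erase hm₀e]
        have hC' : ∀ t ∈ C, t < k → t = δ.val := by rw [hδval]; exact hC
        have hiff1 := SBlocked hk3 h3 HM hke δ C hC' s₁ hs₁k
        have hiff2 := SBlocked hk3 h3 HM hke δ C hC' s₂ hs₂k
        rw [hs₁] at hiff1
        rw [hs₂] at hiff2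
        have : C ∪ {n} ∈ E := hiff2.mpr (hiff1.mp (heC ▸ he))
        rwa [hCdef] at this
      · -- free case
        push_neg at hex
        set C : Finset ℕ := e.erase m₀ with hCdef
        have hC : ∀ t ∈ C, k ≤ t := by
          intro t ht
          obtain ⟨htm, hte⟩ := Finset.mem_erase.mp ht
          by_contra hlt
          exact hlt (hex t hte htm)
        set γ₀ : ZMod k := ((m₀ : ℕ) : ZMod k) with hγdef
        have hγval : γ₀.val = m₀ := val_cast_lt hm₀k
        have heC : e = C ∪ {γ₀.val} := by
          rw [hγval, hCdef, Finset.union_comm, ← Finset.insert_eq, Finset.insert_erase hm₀e]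
        set s := (m₀ + k - n)/2 with hsdef
        have h2s : 2*s = m₀ + k - n := by omega
        have hkey : γ₀ - ((2*s : ℕ) : ZMod k) = ((n : ℕ) : ZMod k) := by
          rw [h2s, show m₀ + k - n = m₀ + (k - n) by omega, Nat.cast_add,
            Nat.cast_sub (by omega : n ≤ k), ZMod.natCast_self, hγdef]
          ring
        have := SFree hk3 h3 HM s γ₀ C hC (heC ▸ he)
        rw [hkey, val_cast_lt hnk] at this
        rwa [hCdef] at this
  rcases hprime.2 M hmod with h | h | ⟨v, h⟩
  · have : (0:ℕ) ∈ M := (hmemM 0).mpr ⟨by omega, by omega⟩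
    rw [h] at this
    exact absurd this (Finset.notMem_empty _)
  · have h1M : (1:ℕ) ∉ M := fun hh => by have := (hmemM 1).mp hh; omega
    rw [h] at h1M
    exact h1M (Finset.mem_range.mpr (by omega))
  · have h0 : (0:ℕ) ∈ M := (hmemM 0).mpr ⟨by omega, by omega⟩
    have h2 : (2:ℕ) ∈ M := (hmemM 2).mpr ⟨by omega, by omega⟩
    rw [h, Finset.mem_singleton] at h0 h2
    omega



include hp hk3 hkp h3 HM in
lemma k_lt_p_false (hprime : IsPrime (Finset.range p) E) (hko : k % 2 = 1)
    (hlt : k < p) : False := by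
  have hnz : NeZero k := ⟨by omega⟩
  have hmod : IsModule (Finset.range p) E (Finset.range k) := by
    constructor
    · intro t ht
      exact Finset.mem_range.mpr (lt_of_lt_of_le (Finset.mem_range.mp ht) hkp)
    · intro e he hcap hsd
      obtain ⟨m₀, hm₀⟩ := hcap
      rw [Finset.mem_inter, Finset.mem_range] at hm₀
      obtain ⟨hm₀e, hm₀k⟩ := hm₀
      -- only one element below k
      have huniq : ∀ t ∈ e, t < k → t = m₀ := by
        intro t ht htk
        by_contra htm
        obtain ⟨w, hwe, hwt, hwm, hweq⟩ := third_elem h3 he ht hm₀e htm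
        rcases Nat.lt_or_ge w k with hwk | hwk
        · have := triple_in_k_odd hk3 h3 HM he ht hm₀e hwe htm hwt.symm hwm.symm htk hm₀k hwk
          -- three in range k means k odd; but that's consistent... need different route:
          obtain ⟨u, hu⟩ := hsd
          rw [Finset.mem_sdiff, Finset.mem_range] at hu
          have : u ∈ ({t, m₀, w} : Finset ℕ) := by rw [← hweq]; exact hu.1
          simp only [Finset.mem_insert, Finset.mem_singleton] at this
          rcases this with h | h | h <;> omega
        · have hclean : ∀ s ∈ e, s = min t m₀ ∨ s = max t m₀ ∨ k ≤ s := by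
            intro s hs
            rw [hweq] at hs
            simp only [Finset.mem_insert, Finset.mem_singleton] at hs
            rcases hs with h | h | h <;> subst h <;> omega
          rcases Ne.lt_or_gt htm with h | h
          · refine pair_gap_false hk3 h3 HM he ht hm₀e h hm₀k ?_ (by omega)
            intro s hs
            have := hclean s hs
            omega
          · refine pair_gap_false hk3 h3 HM he hm₀e ht h htk ?_ (by omega)
            intro s hs
            have := hclean s hs
            omega
      have hcapeq : e ∩ Finset.range k = {m₀} := by
        ext t
        rw [Finset.mem_inter, Finset.mem_range, Finset.mem_singleton]
        constructor
        · rintro ⟨ht, htk⟩; exact huniq t ht htk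
        · rintro rfl; exact ⟨hm₀e, hm₀k⟩
      refine ⟨m₀, Finset.mem_range.mpr hm₀k, hcapeq, ?_⟩
      intro n hn
      rw [Finset.mem_range] at hn
      rw [← Finset.erase_eq]
      set C : Finset ℕ := e.erase m₀ with hCdef
      have hC : ∀ t ∈ C, k ≤ t := by
        intro t ht
        obtain ⟨htm, hte⟩ := Finset.mem_erase.mp ht
        by_contra hltk
        exact htm (huniq t hte (by omega))
      set γ₀ : ZMod k := ((m₀ : ℕ) : ZMod k) with hγdef
      have hγval : γ₀.val = m₀ := val_cast_lt hm₀k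
      have heC : e = C ∪ {γ₀.val} := by
        rw [hγval, hCdef, Finset.union_comm, ← Finset.insert_eq, Finset.insert_erase hm₀e]
      set s := (m₀ + k - n) * ((k+1)/2) with hsdef
      have hkey : γ₀ - ((2*s : ℕ) : ZMod k) = ((n : ℕ) : ZMod k) := by
        have h2s : (2*s : ℕ) = (m₀ + k - n) * (k+1) := by
          rw [hsdef]
          have : 2 * ((k+1)/2) = k+1 := by omega
          rw [show 2 * ((m₀ + k - n) * ((k+1)/2)) = (m₀ + k - n) * (2 * ((k+1)/2)) by ring,
            this]
        rw [h2s, Nat.cast_mul, show ((k+1 : ℕ) : ZMod k) = 1 by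
          rw [Nat.cast_add, ZMod.natCast_self, zero_add, Nat.cast_one], mul_one,
          show m₀ + k - n = m₀ + (k - n) by omega, Nat.cast_add,
          Nat.cast_sub (by omega : n ≤ k), ZMod.natCast_self, hγdef]
        ring
      have := SFree hk3 h3 HM s γ₀ C hC (heC ▸ he)
      rw [hkey, val_cast_lt hn] at this
      rwa [hCdef] at this
  rcases hprime.2 _ hmod with h | h | ⟨v, h⟩
  · have : (0:ℕ) ∈ Finset.range k := Finset.mem_range.mpr (by omega)
    rw [h] at this
    exact absurd this (Finset.notMem_empty _)
  · have : (k:ℕ) ∈ Finset.range p := Finset.mem_range.mpr hlt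
    rw [← h, Finset.mem_range] at this
    omega
  · have h0 : (0:ℕ) ∈ Finset.range k := Finset.mem_range.mpr (by omega)
    have h1 : (1:ℕ) ∈ Finset.range k := Finset.mem_range.mpr (by omega)
    rw [h, Finset.mem_singleton] at h0 h1
    omega



lemma triple_perm (A B C : ℕ) : ({A,B,C} : Finset ℕ) = {A,C,B} := by
  ext t; simp only [Finset.mem_insert, Finset.mem_singleton]; tauto

lemma erase_last {A B C : ℕ} (h1 : C ≠ A) (h2 : C ≠ B) :
    ({A,B,C} : Finset ℕ).erase C = {A,B} := by
  ext t
  simp only [Finset.mem_erase, Finset.mem_insert, Finset.mem_singleton]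
  omega

lemma pair_union (A B D : ℕ) : ({A,B} : Finset ℕ) ∪ {D} = {A,B,D} := by
  ext t; simp only [Finset.mem_union, Finset.mem_insert, Finset.mem_singleton]; tauto

lemma add_val_ne (x : ZMod k) {i j : ℕ} (hi : i < k) (hj : j < k) (hij : i ≠ j) :
    (x + ((i:ℕ) : ZMod k)).val ≠ (x + ((j:ℕ) : ZMod k)).val := by
  intro h
  exact hij (add_cast_inj x hi hj (val_inj h))

lemma self_val_eq (x : ZMod k) : x.val = (x + ((0:ℕ) : ZMod k)).val := by simp

include hk3 h3 HM in
lemma moveLast (x : ZMod k) (a b : ℕ) (ha : 0 < a) (hb : 0 < b) (hab : a+b+2 < k) :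
    (({x.val, (x+((a:ℕ):ZMod k)).val, (x+((a+b:ℕ):ZMod k)).val} : Finset ℕ) ∈ E) ↔
    (({x.val, (x+((a:ℕ):ZMod k)).val, (x+((a+b+2:ℕ):ZMod k)).val} : Finset ℕ) ∈ E) := by
  have hnz : NeZero k := ⟨by omega⟩
  have hne := fun {i j : ℕ} (hi : i < k) (hj : j < k) (hij : i ≠ j) => add_val_ne x hi hj hij
  have hx0 := self_val_eq x
  set α : ZMod k := x + ((a+b+1 : ℕ) : ZMod k) with hα
  have hsub : α - 1 = x + ((a+b : ℕ) : ZMod k) := by rw [hα]; push_cast; ring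
  have hadd : α + 1 = x + ((a+b+2 : ℕ) : ZMod k) := by rw [hα]; push_cast; ring
  constructor
  · intro he
    have key := hB hk3 h3 HM α he ?h1 ?h2 ?h0
    case h1 =>
      rw [hsub]
      simp only [Finset.mem_insert, Finset.mem_singleton]; tauto
    case h2 =>
      rw [hadd]
      intro hmem
      simp only [Finset.mem_insert, Finset.mem_singleton] at hmem
      rcases hmem with h | h | h
      · exact hne (by omega) (by omega) (by omega) (hx0 ▸ h.symm)
      · exact hne (by omega) (by omega) (by omega) h.symm
      · exact hne (by omega) (by omega) (by omega) h.symm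
    case h0 =>
      intro hmem
      rw [hα] at hmem
      simp only [Finset.mem_insert, Finset.mem_singleton] at hmem
      rcases hmem with h | h | h
      · exact hne (by omega) (by omega) (by omega) (hx0 ▸ h.symm)
      · exact hne (by omega) (by omega) (by omega) h.symm
      · exact hne (by omega) (by omega) (by omega) h.symm
    rw [hsub, hadd] at key
    have hCA : (x + ((a+b:ℕ):ZMod k)).val ≠ x.val := fun h =>
      hne (show a+b < k by omega) (show (0:ℕ) < k by omega) (by omega) (h.trans hx0)
    have hCB : (x + ((a+b:ℕ):ZMod k)).val ≠ (x+((a:ℕ):ZMod k)).val :=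
      hne (by omega) (by omega) (by omega)
    rwa [erase_last hCA hCB, pair_union] at key
  · intro he
    have key := hB' hk3 h3 HM α he ?h1 ?h2 ?h0
    case h1 =>
      rw [hadd]
      simp only [Finset.mem_insert, Finset.mem_singleton]; tauto
    case h2 =>
      rw [hsub]
      intro hmem
      simp only [Finset.mem_insert, Finset.mem_singleton] at hmem
      rcases hmem with h | h | h
      · exact hne (by omega) (by omega) (by omega) (hx0 ▸ h.symm)
      · exact hne (by omega) (by omega) (by omega) h.symm
      · exact hne (by omega) (by omega) (by omega) h.symm
    case h0 =>
      intro hmem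
      rw [hα] at hmem
      simp only [Finset.mem_insert, Finset.mem_singleton] at hmem
      rcases hmem with h | h | h
      · exact hne (by omega) (by omega) (by omega) (hx0 ▸ h.symm)
      · exact hne (by omega) (by omega) (by omega) h.symm
      · exact hne (by omega) (by omega) (by omega) h.symm
    rw [hadd, hsub] at key
    have hCA : (x + ((a+b+2:ℕ):ZMod k)).val ≠ x.val := fun h =>
      hne (show a+b+2 < k by omega) (show (0:ℕ) < k by omega) (by omega) (h.trans hx0)
    have hCB : (x + ((a+b+2:ℕ):ZMod k)).val ≠ (x+((a:ℕ):ZMod k)).val :=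
      hne (by omega) (by omega) (by omega)
    rwa [erase_last hCA hCB, pair_union] at key


include hk3 h3 HM in
lemma moveMid (x : ZMod k) (c : ℕ) (hc : 0 < c) (h4 : c + 3 < k) :
    (({x.val, (x+((c+2:ℕ):ZMod k)).val, (x+((c+3:ℕ):ZMod k)).val} : Finset ℕ) ∈ E) ↔
    (({x.val, (x+((c:ℕ):ZMod k)).val, (x+((c+3:ℕ):ZMod k)).val} : Finset ℕ) ∈ E) := by
  have hnz : NeZero k := ⟨by omega⟩
  have hne := fun {i j : ℕ} (hi : i < k) (hj : j < k) (hij : i ≠ j) => add_val_ne x hi hj hij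
  have hx0 := self_val_eq x
  set α : ZMod k := x + ((c+1 : ℕ) : ZMod k) with hα
  have hsub : α - 1 = x + ((c : ℕ) : ZMod k) := by rw [hα]; push_cast; ring
  have hadd : α + 1 = x + ((c+2 : ℕ) : ZMod k) := by rw [hα]; push_cast; ring
  have hnexc2 : (x + ((c+2:ℕ):ZMod k)).val ≠ x.val := fun h =>
    hne (show c+2 < k by omega) (show (0:ℕ) < k by omega) (by omega) (h.trans hx0)
  have hnexc : (x + ((c:ℕ):ZMod k)).val ≠ x.val := fun h =>
    hne (show c < k by omega) (show (0:ℕ) < k by omega) (by omega) (h.trans hx0)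
  constructor
  · intro he
    have key := hB' hk3 h3 HM α he ?h1 ?h2 ?h0
    case h1 =>
      rw [hadd]
      simp only [Finset.mem_insert, Finset.mem_singleton]; tauto
    case h2 =>
      rw [hsub]
      intro hmem
      simp only [Finset.mem_insert, Finset.mem_singleton] at hmem
      rcases hmem with h | h | h
      · exact hnexc h
      · exact hne (by omega) (by omega) (by omega) h
      · exact hne (by omega) (by omega) (by omega) h
    case h0 =>
      intro hmem
      rw [hα] at hmem
      simp only [Finset.mem_insert, Finset.mem_singleton] at hmem
      rcases hmem with h | h | h
      · exact hne (by omega) (by omega) (by omega) (hx0 ▸ h.symm)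
      · exact hne (by omega) (by omega) (by omega) h.symm
      · exact hne (by omega) (by omega) (by omega) h.symm
    rw [hadd, hsub] at key
    rw [triple_perm] at key
    rw [erase_last hnexc2 (hne (by omega) (by omega) (by omega)), pair_union,
      triple_perm] at key
    exact key
  · intro he
    have key := hB hk3 h3 HM α he ?h1 ?h2 ?h0
    case h1 =>
      rw [hsub]
      simp only [Finset.mem_insert, Finset.mem_singleton]; tauto
    case h2 =>
      rw [hadd]
      intro hmem
      simp only [Finset.mem_insert, Finset.mem_singleton] at hmem
      rcases hmem with h | h | h
      · exact hnexc2 h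
      · exact hne (by omega) (by omega) (by omega) h
      · exact hne (by omega) (by omega) (by omega) h
    case h0 =>
      intro hmem
      rw [hα] at hmem
      simp only [Finset.mem_insert, Finset.mem_singleton] at hmem
      rcases hmem with h | h | h
      · exact hne (by omega) (by omega) (by omega) (hx0 ▸ h.symm)
      · exact hne (by omega) (by omega) (by omega) h.symm
      · exact hne (by omega) (by omega) (by omega) h.symm
    rw [hsub, hadd] at key
    rw [triple_perm] at key
    rw [erase_last hnexc (hne (by omega) (by omega) (by omega)), pair_union,
      triple_perm] at key
    exact key

include hk3 h3 HM in
lemma redB : ∀ (m : ℕ) (x : ZMod k) (a b : ℕ), 0 < a → 0 < b → a+b+2*m < k →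
    ((({x.val, (x+((a:ℕ):ZMod k)).val, (x+((a+b+2*m:ℕ):ZMod k)).val} : Finset ℕ) ∈ E) ↔
     (({x.val, (x+((a:ℕ):ZMod k)).val, (x+((a+b:ℕ):ZMod k)).val} : Finset ℕ) ∈ E)) := by
  intro m
  induction m with
  | zero =>
    intro x a b ha hb hbound
    rw [show a+b+2*0 = a+b by ring]
  | succ n ih =>
    intro x a b ha hb hbound
    have l1 := moveLast hk3 h3 HM x a (b+2*n) ha (by omega) (by omega)
    rw [show a+(b+2*n) = a+b+2*n by ring, show a+b+2*n+2 = a+b+2*(n+1) by ring] at l1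
    exact l1.symm.trans (ih x a b ha hb (by omega))

include hk3 h3 HM in
lemma redA : ∀ (m : ℕ) (x : ZMod k) (a : ℕ), 0 < a → a+2*m+1 < k →
    ((({x.val, (x+((a+2*m:ℕ):ZMod k)).val, (x+((a+2*m+1:ℕ):ZMod k)).val} : Finset ℕ) ∈ E) ↔
     (({x.val, (x+((a:ℕ):ZMod k)).val, (x+((a+1:ℕ):ZMod k)).val} : Finset ℕ) ∈ E)) := by
  intro m
  induction m with
  | zero =>
    intro x a ha hbound
    rw [show a+2*0 = a by ring]
  | succ n ih =>
    intro x a ha hbound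
    have l1 := moveMid hk3 h3 HM x (a+2*n) (by omega) (by omega)
    have l2 := redB hk3 h3 HM 1 x (a+2*n) 1 (by omega) (by omega) (by omega)
    rw [show a+2*n+1+2*1 = a+2*n+3 by ring] at l2
    have l3 := ih x a ha (by omega)
    rw [show a+2*(n+1) = a+2*n+2 by ring, show a+2*n+2+1 = a+2*n+3 by ring]
    exact l1.trans (l2.trans l3)

include hk3 h3 HM in
lemma rotStep (hko : k % 2 = 1) (x : ZMod k) :
    (({x.val, (x+((1:ℕ):ZMod k)).val, (x+((2:ℕ):ZMod k)).val} : Finset ℕ) ∈ E) ↔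
    (({(x-1).val, ((x-1)+((1:ℕ):ZMod k)).val, ((x-1)+((2:ℕ):ZMod k)).val} : Finset ℕ) ∈ E) := by
  have hnz : NeZero k := ⟨by omega⟩
  have hA1 : (x-1) + ((1:ℕ):ZMod k) = x := by push_cast; ring
  have hA2 : (x-1) + ((2:ℕ):ZMod k) = x + ((1:ℕ):ZMod k) := by push_cast; ring
  have hA3 : x + ((k-1:ℕ):ZMod k) = x - 1 := by
    rw [Nat.cast_sub (by omega : 1 ≤ k)]
    simp [ZMod.natCast_self]
    ring
  have hset : ({(x-1).val, ((x-1)+((1:ℕ):ZMod k)).val, ((x-1)+((2:ℕ):ZMod k)).val} : Finset ℕ)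
      = {x.val, (x+((1:ℕ):ZMod k)).val, (x+((k-1:ℕ):ZMod k)).val} := by
    rw [hA1, hA2, hA3]
    ext t; simp only [Finset.mem_insert, Finset.mem_singleton]; tauto
  rw [hset]
  have l1 := redB hk3 h3 HM ((k-3)/2) x 1 1 (by omega) (by omega) (by omega)
  rw [show 1+1+2*((k-3)/2) = k-1 by omega] at l1
  exact l1.symm

include hk3 h3 HM in
lemma rotAll (hko : k % 2 = 1) : ∀ (n : ℕ),
    (({((n:ℕ):ZMod k).val, (((n:ℕ):ZMod k)+((1:ℕ):ZMod k)).val,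
        (((n:ℕ):ZMod k)+((2:ℕ):ZMod k)).val} : Finset ℕ) ∈ E) ↔
    (({(0:ZMod k).val, ((0:ZMod k)+((1:ℕ):ZMod k)).val,
        ((0:ZMod k)+((2:ℕ):ZMod k)).val} : Finset ℕ) ∈ E) := by
  intro n
  induction n with
  | zero => norm_num
  | succ n ih =>
    have hxn : ((n+1:ℕ):ZMod k) - 1 = ((n:ℕ):ZMod k) := by push_cast; ring
    have := rotStep hk3 h3 HM hko (((n+1:ℕ)):ZMod k)
    rw [hxn] at this
    exact this.trans ih

include hk3 h3 HM in
lemma chainIff (hko : k % 2 = 1) (x : ZMod k) (a b : ℕ) (ha : a % 2 = 1) (hb : b % 2 = 1)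
    (hab : a + b < k) :
    (({x.val, (x+((a:ℕ):ZMod k)).val, (x+((a+b:ℕ):ZMod k)).val} : Finset ℕ) ∈ E) ↔
    (({(0:ZMod k).val, ((0:ZMod k)+((1:ℕ):ZMod k)).val,
        ((0:ZMod k)+((2:ℕ):ZMod k)).val} : Finset ℕ) ∈ E) := by
  have hnz : NeZero k := ⟨by omega⟩
  have l1 := redB hk3 h3 HM ((b-1)/2) x a 1 (by omega) (by omega) (by omega)
  rw [show a+1+2*((b-1)/2) = a+b by omega] at l1
  have l2 := redA hk3 h3 HM ((a-1)/2) x 1 (by omega) (by omega)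
  rw [show 1+2*((a-1)/2) = a by omega] at l2
  have l3 : x = ((x.val : ℕ) : ZMod k) := (ZMod.natCast_rightInverse x).symm
  have l4 : (({x.val, (x+((1:ℕ):ZMod k)).val, (x+((2:ℕ):ZMod k)).val} : Finset ℕ) ∈ E) ↔
      (({(0:ZMod k).val, ((0:ZMod k)+((1:ℕ):ZMod k)).val,
        ((0:ZMod k)+((2:ℕ):ZMod k)).val} : Finset ℕ) ∈ E) := by
    rw [l3]
    exact rotAll hk3 h3 HM hko x.val
  exact l1.trans (l2.trans l4)


include h3 in
lemma edge_sorted {e : Finset ℕ} (he : e ∈ E) :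
    ∃ v1 v2 v3, v1 < v2 ∧ v2 < v3 ∧ v3 < p ∧ e = {v1,v2,v3} := by
  obtain ⟨x,y,z,hxy,hxz,hyz,heq⟩ := Finset.card_eq_three.mp (h3 e he).2
  obtain ⟨v1,v2,v3,h12,h23,hs⟩ := sort3 hxy hxz hyz
  have hv3 : v3 ∈ e := by rw [heq, hs]; simp
  have := Finset.mem_range.mp ((h3 e he).1 hv3)
  exact ⟨v1, v2, v3, h12, h23, this, heq.trans hs⟩


include hp hk3 hkp h3 HM in
lemma E_eq (hprime : IsPrime (Finset.range p) E) (hko : k % 2 = 1) (hkeq : k = p) :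
    E = c3Edges (Finset.range p) arcT := by
  have hnz : NeZero k := ⟨by omega⟩
  have hEne : ∃ e, e ∈ E := by
    by_contra h
    push_neg at h
    have hmod : IsModule (Finset.range p) E {0,1} := by
      refine ⟨?_, fun e he => absurd he (h e)⟩
      intro t ht
      simp only [Finset.mem_insert, Finset.mem_singleton] at ht
      exact Finset.mem_range.mpr (by omega)
    rcases hprime.2 _ hmod with h0 | h0 | ⟨v, h0⟩
    · have h1 : (0:ℕ) ∈ ({0,1} : Finset ℕ) := by simp
      rw [h0] at h1
      exact absurd h1 (Finset.notMem_empty _)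
    · have hcard := congrArg Finset.card h0
      rw [Finset.card_range] at hcard
      have h2 : ({0,1} : Finset ℕ).card = 2 := by decide
      omega
    · have h0' : (0:ℕ) ∈ ({0,1} : Finset ℕ) := by simp
      have h1' : (1:ℕ) ∈ ({0,1} : Finset ℕ) := by simp
      rw [h0] at h0' h1'
      rw [Finset.mem_singleton] at h0' h1'
      omega
  have tform : ∀ v1 v2 v3 : ℕ, v1 < v2 → v2 < v3 → v3 < k →
      ({v1,v2,v3} : Finset ℕ) =
      {((v1:ℕ):ZMod k).val, (((v1:ℕ):ZMod k) + ((v2-v1:ℕ):ZMod k)).val,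
       (((v1:ℕ):ZMod k) + (((v2-v1)+(v3-v2):ℕ):ZMod k)).val} := by
    intro v1 v2 v3 h12 h23 h3k
    rw [show (((v1:ℕ):ZMod k) + ((v2-v1:ℕ):ZMod k)) = ((v2:ℕ):ZMod k) by
      rw [← Nat.cast_add]; congr 1; omega]
    rw [show (((v1:ℕ):ZMod k) + (((v2-v1)+(v3-v2):ℕ):ZMod k)) = ((v3:ℕ):ZMod k) by
      rw [← Nat.cast_add]; congr 1; omega]
    rw [val_cast_lt (by omega), val_cast_lt (by omega), val_cast_lt (by omega)]
  obtain ⟨e₀, he₀⟩ := hEne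
  obtain ⟨w1, w2, w3, g12, g23, g3p, he₀eq⟩ := edge_sorted h3 he₀
  obtain ⟨q1, q2, q3⟩ := allOddGaps hk3 h3 HM g12 g23 (by omega) (he₀eq ▸ he₀)
  have hbase := (chainIff hk3 h3 HM hko ((w1:ℕ):ZMod k) (w2-w1) (w3-w2) q1 q2 (by omega)).mp
    (by rw [← tform w1 w2 w3 g12 g23 (by omega), ← he₀eq]; exact he₀)
  ext e
  constructor
  · intro he
    obtain ⟨v1,v2,v3,h12,h23,h3p,heq⟩ := edge_sorted h3 he
    obtain ⟨o1,o2,o3⟩ := allOddGaps hk3 h3 HM h12 h23 (by omega) (heq ▸ he)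
    exact (c3_char p e).mpr ⟨v1,v2,v3,h12,h23,h3p,heq,o1,o2⟩
  · intro he
    obtain ⟨v1,v2,v3,h12,h23,h3p,heq,o1,o2⟩ := (c3_char p e).mp he
    rw [heq, tform v1 v2 v3 h12 h23 (by omega)]
    exact (chainIff hk3 h3 HM hko ((v1:ℕ):ZMod k) (v2-v1) (v3-v2) o1 o2 (by omega)).mpr hbase

end Core

end PCC

theorem primality_cycle_characterization
    (p : ℕ) (hp : 5 ≤ p) (edges : Set (Finset ℕ))
    (h3 : Is3Hypergraph (Finset.range p) edges)
    (hc : IsCritical (Finset.range p) edges)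
    (k : ℕ) (hk3 : 3 ≤ k) (hkp : k ≤ p)
    (hcyc : ∀ i < k, ∀ j < k, PrimAdj (Finset.range p) edges i j ↔
      (j = i + 1 ∨ i = j + 1 ∨ (i = 0 ∧ j = k - 1) ∨ (j = 0 ∧ i = k - 1))) :
    Odd p ∧ k = p ∧ edges = c3Edges (Finset.range p) arcT := by
  haveI : NeZero k := ⟨by omega⟩
  have HM := PCC.cycle_modules p k hp hk3 hkp edges hc hcyc
  have hprime := hc.1
  have hko : k % 2 = 1 := by
    rcases Nat.mod_two_eq_zero_or_one k with h | h
    · exact (PCC.k_even_false hp hk3 hkp h3 HM hprime h).elim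
    · exact h
  have hkeq : k = p := by
    rcases Nat.lt_or_ge k p with h | h
    · exact (PCC.k_lt_p_false hp hk3 hkp h3 HM hprime hko h).elim
    · omega
  refine ⟨?_, hkeq, PCC.E_eq hp hk3 hkp h3 HM hprime hko hkeq⟩
  rw [← hkeq]
  exact Nat.odd_iff.mpr hko
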